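/- Fix M ≥ 1, P > 0, N > 0. For each L, let (p_1^{(L)}, …, p_L^{(L)}) be nonnegative reals with ∑_{k=1}^L p_k^{(L)} = P, and suppose max_{1≤k≤L} p_k^{(L)} → 0 as L → ∞. Define r_k^{(L)} = (1/2)·log(1 + p_k^{(L)}/(M·P − M·∑_{j<k} p_j^{(L)} − p_k^{(L)} + N)). Then lim_{L→∞} ∑_{k=1}^L r_k^{(L)} = (1/(2M))·log(1 + M·P/N). -/

import Mathlib

lemma log_bd (x : ℝ) (hx : 0 ≤ x) : x / (1 + x) ≤ Real.log (1 + x) ∧ Real.log (1 + x) ≤ x := by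
  have h1 : (0:ℝ) < 1 + x := by linarith
  constructor
  · have h2 := Real.log_le_sub_one_of_pos (x := (1+x)⁻¹) (by positivity)
    rw [Real.log_inv] at h2
    have h3 : (1+x)⁻¹ - 1 = -(x/(1+x)) := by field_simp; ring
    linarith [h3 ▸ h2]
  · have := Real.log_le_sub_one_of_pos h1
    linarith

lemma key (m N f q : ℝ) (hm : 1 ≤ m) (hN : 0 < N) (hq : 0 ≤ q) (hf : N ≤ f - m*q) :
    |(1/2) * Real.log (1 + q/(f - q)) - (1/(2*m)) * (Real.log f - Real.log (f - m*q))| ≤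
      m * q^2 / (2*N^2) := by
  have hmq : q ≤ m*q := by nlinarith
  have hfm : 0 < f - m*q := by linarith
  have hfq : 0 < f - q := by linarith
  have hfpos : 0 < f := by nlinarith
  have hm0 : 0 < m := by linarith
  set x := q/(f-q) with hx
  have hx0 : 0 ≤ x := by positivity
  have h1x : 1 + x = f/(f-q) := by
    rw [hx, eq_div_iff hfq.ne', add_mul, one_mul, div_mul_cancel₀ _ hfq.ne']; ring
  have h1xpos : 0 < 1 + x := by linarith
  have hxx : x/(1+x) = q/f := by
    rw [div_eq_div_iff h1xpos.ne' hfpos.ne', hx, h1x]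
    field_simp
  obtain ⟨Tlo, Thi⟩ := log_bd x hx0
  rw [hxx] at Tlo
  have hA : Real.log f - Real.log (f - m*q) = Real.log (1 + m*q/(f-m*q)) := by
    rw [← Real.log_div (ne_of_gt hfpos) (ne_of_gt hfm)]
    congr 1
    symm
    rw [eq_div_iff hfm.ne', add_mul, one_mul, div_mul_cancel₀ _ hfm.ne']; ring
  set y := m*q/(f-m*q) with hy
  have hy0 : 0 ≤ y := by positivity
  have h1y : 1 + y = f/(f-m*q) := by
    rw [hy, eq_div_iff hfm.ne', add_mul, one_mul, div_mul_cancel₀ _ hfm.ne']; ring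
  have h1ypos : 0 < 1 + y := by linarith
  have hyy : y/(1+y) = m*q/f := by
    rw [div_eq_div_iff h1ypos.ne' hfpos.ne', hy, h1y]
    field_simp
  obtain ⟨Alo, Ahi⟩ := log_bd y hy0
  rw [hyy] at Alo
  rw [hA]
  have e1 : q/(2*f) = (1/2)*(q/f) := by
    rw [div_mul_eq_mul_div, one_mul, div_div, mul_comm]
  have e2 : q/(2*(f-m*q)) = (1/2)*(q/(f-m*q)) := by
    rw [div_mul_eq_mul_div, one_mul, div_div, mul_comm]
  have T1 : q/(2*f) ≤ (1/2) * Real.log (1+x) := by rw [e1]; linarith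
  have T2 : (1/2) * Real.log (1+x) ≤ q/(2*(f-m*q)) := by
    have hxle : x ≤ q/(f-m*q) := by
      apply div_le_div_of_nonneg_left hq hfm; linarith
    rw [e2]; linarith
  have A1 : q/(2*f) ≤ (1/(2*m)) * Real.log (1+y) := by
    have h := mul_le_mul_of_nonneg_left Alo (le_of_lt (by positivity : (0:ℝ) < 1/(2*m)))
    have e3 : (1/(2*m)) * (m*q/f) = q/(2*f) := by
      field_simp [hfpos.ne', hm0.ne']
    linarith [e3 ▸ h]
  have A2 : (1/(2*m)) * Real.log (1+y) ≤ q/(2*(f-m*q)) := by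
    have h := mul_le_mul_of_nonneg_left Ahi (le_of_lt (by positivity : (0:ℝ) < 1/(2*m)))
    have e4 : (1/(2*m)) * y = q/(2*(f-m*q)) := by
      rw [hy]; field_simp [hfm.ne', hm0.ne']
    linarith [e4 ▸ h]
  have gap : q/(2*(f-m*q)) - q/(2*f) ≤ m * q^2 / (2*N^2) := by
    have e : q/(2*(f-m*q)) - q/(2*f) = m*q^2/(2*((f-m*q)*f)) := by
      rw [div_sub_div _ _ (mul_ne_zero two_ne_zero hfm.ne') (mul_ne_zero two_ne_zero hfpos.ne'),
        div_eq_div_iff (mul_ne_zero (mul_ne_zero two_ne_zero hfm.ne') (mul_ne_zero two_ne_zero hfpos.ne'))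
          (mul_ne_zero two_ne_zero (mul_ne_zero hfm.ne' hfpos.ne'))]; ring
    rw [e]
    apply div_le_div_of_nonneg_left (by positivity) (by positivity)
    nlinarith
  rw [abs_le]
  constructor <;> linarith

theorem stmt4 (M : ℕ) (P N : ℝ) (hM : 1 ≤ M) (hP : 0 < P) (hN : 0 < N)
    (p : ℕ → ℕ → ℝ)
    (hnonneg : ∀ L, ∀ k ∈ Finset.Icc 1 L, 0 ≤ p L k)
    (hsum : ∀ L, 1 ≤ L → ∑ k ∈ Finset.Icc 1 L, p L k = P)
    (hmax : ∀ ε : ℝ, 0 < ε → ∃ L₀ : ℕ, ∀ L ≥ L₀, ∀ k ∈ Finset.Icc 1 L, p L k < ε) :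
    Filter.Tendsto
      (fun L : ℕ => ∑ k ∈ Finset.Icc 1 L,
        (1 / 2) * Real.log (1 + p L k /
          ((M : ℝ) * P - M * (∑ j ∈ Finset.Ico 1 k, p L j) - p L k + N)))
      Filter.atTop
      (nhds ((1 / (2 * (M : ℝ))) * Real.log (1 + M * P / N))) := by
  have hM1 : (1:ℝ) ≤ (M:ℝ) := by exact_mod_cast hM
  have hMpos : (0:ℝ) < M := by linarith
  have htgt : (1 / (2 * (M : ℝ))) * Real.log (1 + (M:ℝ) * P / N)
      = (1/(2*(M:ℝ))) * (Real.log ((M:ℝ)*P + N) - Real.log N) := by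
    rw [← Real.log_div (by positivity) hN.ne']
    congr 2
    field_simp
    ring
  rw [Metric.tendsto_atTop]
  intro ε hε
  set C := (M:ℝ)*P/(2*N^2) + 1 with hC
  have hCpos : 0 < C := by positivity
  set δ := ε / C with hδ
  have hδpos : 0 < δ := by positivity
  obtain ⟨L₀, hL₀⟩ := hmax δ hδpos
  refine ⟨max L₀ 1, fun L hL => ?_⟩
  have hL1 : 1 ≤ L := le_trans (le_max_right _ _) hL
  have hLL0 : L₀ ≤ L := le_trans (le_max_left _ _) hL
  set F : ℕ → ℝ := fun k => Real.log ((M:ℝ)*P - (M:ℝ)*(∑ j ∈ Finset.Ico 1 k, p L j) + N)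
    with hFdef
  have htel : ∑ k ∈ Finset.Icc 1 L, (F k - F (k+1)) = F 1 - F (L+1) := by
    rw [← Finset.Ico_add_one_right_eq_Icc, Finset.sum_Ico_eq_sum_range]
    have h := Finset.sum_range_sub' (fun i => F (1+i)) L
    simp only [Nat.add_sub_cancel]
    convert h using 2 with i
    all_goals ring_nf
  have hF1 : F 1 = Real.log ((M:ℝ)*P + N) := by
    simp [hFdef]
  have hFL : F (L+1) = Real.log N := by
    simp only [hFdef]
    rw [Finset.Ico_add_one_right_eq_Icc, hsum L hL1]
    ring_nf
  -- per-term estimate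
  have hkey : ∀ k ∈ Finset.Icc 1 L,
      |(1 / 2) * Real.log (1 + p L k /
          ((M : ℝ) * P - M * (∑ j ∈ Finset.Ico 1 k, p L j) - p L k + N))
        - (1/(2*(M:ℝ))) * (F k - F (k+1))| ≤ (M:ℝ) * (p L k)^2 / (2*N^2) := by
    intro k hk
    obtain ⟨hk1, hkL⟩ := Finset.mem_Icc.mp hk
    have hq0 : 0 ≤ p L k := hnonneg L k hk
    have hsucc : ∑ j ∈ Finset.Ico 1 (k+1), p L j = (∑ j ∈ Finset.Ico 1 k, p L j) + p L k :=
      Finset.sum_Ico_succ_top hk1 _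
    have hsP : ∑ j ∈ Finset.Ico 1 (k+1), p L j ≤ P := by
      rw [Finset.Ico_add_one_right_eq_Icc]
      calc ∑ j ∈ Finset.Icc 1 k, p L j
          ≤ ∑ j ∈ Finset.Icc 1 L, p L j :=
            Finset.sum_le_sum_of_subset_of_nonneg (Finset.Icc_subset_Icc_right hkL)
              (fun i hi _ => hnonneg L i hi)
        _ = P := hsum L hL1
    set f := (M:ℝ)*P - (M:ℝ)*(∑ j ∈ Finset.Ico 1 k, p L j) + N with hfdef
    have hfMq : N ≤ f - (M:ℝ) * p L k := by
      have he : f - (M:ℝ) * p L k = (M:ℝ)*(P - ∑ j ∈ Finset.Ico 1 (k+1), p L j) + N := by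
        rw [hfdef, hsucc]; ring
      rw [he]
      nlinarith [hsP]
    have hden : (M : ℝ) * P - M * (∑ j ∈ Finset.Ico 1 k, p L j) - p L k + N = f - p L k := by
      rw [hfdef]; ring
    have hFk : F k - F (k+1) = Real.log f - Real.log (f - (M:ℝ) * p L k) := by
      simp only [hFdef]
      rw [hsucc]
      congr 2
      ring
    rw [hden, hFk]
    exact key (M:ℝ) N f (p L k) hM1 hN hq0 hfMq
  rw [Real.dist_eq, htgt]
  have hsplit : (∑ k ∈ Finset.Icc 1 L,
        (1 / 2) * Real.log (1 + p L k /
          ((M : ℝ) * P - M * (∑ j ∈ Finset.Ico 1 k, p L j) - p L k + N)))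
      - (1/(2*(M:ℝ))) * (Real.log ((M:ℝ)*P + N) - Real.log N)
      = ∑ k ∈ Finset.Icc 1 L,
        ((1 / 2) * Real.log (1 + p L k /
          ((M : ℝ) * P - M * (∑ j ∈ Finset.Ico 1 k, p L j) - p L k + N))
          - (1/(2*(M:ℝ))) * (F k - F (k+1))) := by
    rw [Finset.sum_sub_distrib]
    congr 1
    rw [← Finset.mul_sum, htel, hF1, hFL]
  rw [hsplit]
  calc |∑ k ∈ Finset.Icc 1 L,
        ((1 / 2) * Real.log (1 + p L k /
          ((M : ℝ) * P - M * (∑ j ∈ Finset.Ico 1 k, p L j) - p L k + N))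
          - (1/(2*(M:ℝ))) * (F k - F (k+1)))|
      ≤ ∑ k ∈ Finset.Icc 1 L,
        |(1 / 2) * Real.log (1 + p L k /
          ((M : ℝ) * P - M * (∑ j ∈ Finset.Ico 1 k, p L j) - p L k + N))
          - (1/(2*(M:ℝ))) * (F k - F (k+1))| := Finset.abs_sum_le_sum_abs _ _
    _ ≤ ∑ k ∈ Finset.Icc 1 L, (M:ℝ) * (p L k)^2 / (2*N^2) := Finset.sum_le_sum hkey
    _ ≤ ∑ k ∈ Finset.Icc 1 L, ((M:ℝ)/(2*N^2) * δ) * p L k := by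
        apply Finset.sum_le_sum
        intro k hk
        have hq0 : 0 ≤ p L k := hnonneg L k hk
        have hqδ : p L k < δ := hL₀ L hLL0 k hk
        have e : (M:ℝ) * (p L k)^2 / (2*N^2) = ((M:ℝ)/(2*N^2)) * (p L k * p L k) := by ring
        have e' : ((M:ℝ)/(2*N^2) * δ) * p L k = ((M:ℝ)/(2*N^2)) * (δ * p L k) := by ring
        rw [e, e']
        apply mul_le_mul_of_nonneg_left _ (by positivity)
        exact mul_le_mul_of_nonneg_right (le_of_lt hqδ) hq0
    _ = ((M:ℝ)/(2*N^2) * δ) * P := by rw [← Finset.mul_sum, hsum L hL1]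
    _ < ε := by
        have : ((M:ℝ)/(2*N^2) * δ) * P = ((M:ℝ)*P/(2*N^2)) * δ := by ring
        rw [this]
        have hCδ : C * δ = ε := by
          rw [hδ]; field_simp
        have hexp : ((M:ℝ)*P/(2*N^2))*δ + δ = ε := by rw [← hCδ, hC]; ring
        nlinarith [hδpos]
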